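/- Every monotonic semantic path order is a reduction order: for every reduction triple (≳, ⊒∼, ⊐), the relation >m defined by s >m t iff s ≳ t and s >_spo t (where >_spo is the semantic path order induced from the order pair (⊒∼, ⊐)) is a well-founded strict order on terms closed under contexts and closed under substitutions. -/

import Mathlib

/-- First-order terms over a signature `F` with arity function `ar` and variables `V`. -/
inductive Term (F : Type) (ar : F → ℕ) (V : Type) : Type where
  | var : V → Term F ar V
  | app : (f : F) → (Fin (ar f) → Term F ar V) → Term F ar V

namespace Term

variable {F V : Type} {ar : F → ℕ}

/-- Application of a substitution `σ : V → Term F ar V` to a term. -/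
def subst (σ : V → Term F ar V) : Term F ar V → Term F ar V
  | var v => σ v
  | app f args => app f (fun i => (args i).subst σ)

/-- Interpretation of a term in an `F`-algebra with carrier `A` under assignment `α`. -/
def eval {A : Type} (I : (f : F) → (Fin (ar f) → A) → A) (α : V → A) :
    Term F ar V → A
  | var v => α v
  | app f args => I f (fun i => (args i).eval I α)

/-- A term is a non-variable term (function application). -/
def IsApp : Term F ar V → Prop
  | var _ => False
  | app _ _ => True

end Term

section Algebra

variable {F V A : Type}

/-- `RC lt a b` : reflexive closure of the strict order `lt`, i.e. `a ≤ b`. -/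
def RC (lt : A → A → Prop) (a b : A) : Prop := lt a b ∨ a = b

variable (ar : F → ℕ) (I : (f : F) → (Fin (ar f) → A) → A) (lt : A → A → Prop)

/-- `s >_A t` : `[α](t) < [α](s)` for every assignment `α`. -/
def GTA (s t : Term F ar V) : Prop := ∀ α : V → A, lt (t.eval I α) (s.eval I α)

/-- `s ≥_A t` : `[α](t) ≤ [α](s)` for every assignment `α`. -/
def GEA (s t : Term F ar V) : Prop := ∀ α : V → A, RC lt (t.eval I α) (s.eval I α)

/-- The algebra is simple: `f_A(a_1, …, a_n) ≥ a_i`. -/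
def Simple : Prop := ∀ (f : F) (as : Fin (ar f) → A) (i : Fin (ar f)), RC lt (as i) (I f as)

/-- The algebra is weakly monotone: `a_i > b` implies
`f_A(a_1,…,a_i,…,a_n) ≥ f_A(a_1,…,b,…,a_n)`. -/
def WeaklyMonotone : Prop :=
  ∀ (f : F) (as : Fin (ar f) → A) (i : Fin (ar f)) (b : A),
    lt b (as i) → RC lt (I f (Function.update as i b)) (I f as)

end Algebra

section WPO

variable {F V A : Type} (ar : F → ℕ) (I : (f : F) → (Fin (ar f) → A) → A)
  (lt : A → A → Prop) (prec : F → F → Prop)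

mutual
  /-- The weighted path order induced by the algebra `(A, I, lt)` and the precedence `prec`. -/
  inductive WPO : Term F ar V → Term F ar V → Prop where
    /-- (1) `s >_A t`. -/
    | alg {s t} : GTA ar I lt s t → WPO s t
    /-- (2a) `s ≥_A t` and `s_i >_wpo t`. -/
    | sub {f ss t} (i : Fin (ar f)) :
        GEA ar I lt (Term.app f ss) t → WPO (ss i) t → WPO (Term.app f ss) t
    /-- (2a) `s ≥_A t` and `s_i = t`. -/
    | subEq {f ss t} (i : Fin (ar f)) :
        GEA ar I lt (Term.app f ss) t → ss i = t → WPO (Term.app f ss) t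
    /-- (2b-i) `s ≥_A t`, `s >_wpo t_j` for all `j`, and `f ≻ g`. -/
    | prc {f ss g ts} :
        GEA ar I lt (Term.app f ss) (Term.app g ts) →
        (∀ j, WPO (Term.app f ss) (ts j)) →
        prec f g → ¬ prec g f → WPO (Term.app f ss) (Term.app g ts)
    /-- (2b-ii) `s ≥_A t`, `s >_wpo t_j` for all `j`, `f ≿ g` and lex comparison of arguments. -/
    | lex {f ss g ts} :
        GEA ar I lt (Term.app f ss) (Term.app g ts) →
        (∀ j, WPO (Term.app f ss) (ts j)) →
        prec f g → WPOLex (List.ofFn ss) (List.ofFn ts) →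
        WPO (Term.app f ss) (Term.app g ts)

  /-- Lexicographic extension of `WPO` to argument lists (of possibly different lengths). -/
  inductive WPOLex : List (Term F ar V) → List (Term F ar V) → Prop where
    | head {s t l₁ l₂} : WPO s t → WPOLex (s :: l₁) (t :: l₂)
    | tail {s l₁ l₂} : WPOLex l₁ l₂ → WPOLex (s :: l₁) (s :: l₂)
    | longer {s l₁} : WPOLex (s :: l₁) []
end

end WPO

section SPO

variable {F V : Type} {ar : F → ℕ} (qge qgt : Term F ar V → Term F ar V → Prop)

mutual
  /-- The semantic path order induced by the order pair `(qge, qgt)` (`⊒∼`, `⊐`). -/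
  inductive SPO : Term F ar V → Term F ar V → Prop where
    /-- (1) `s_i >_spo t`. -/
    | sub {f ss t} (i : Fin (ar f)) : SPO (ss i) t → SPO (Term.app f ss) t
    /-- (1) `s_i = t`. -/
    | subEq {f ss t} (i : Fin (ar f)) : ss i = t → SPO (Term.app f ss) t
    /-- (2a) `s >_spo t_j` for all `j` and `s ⊐ t`. -/
    | gt {f ss g ts} : (∀ j, SPO (Term.app f ss) (ts j)) →
        qgt (Term.app f ss) (Term.app g ts) → SPO (Term.app f ss) (Term.app g ts)
    /-- (2b) `s >_spo t_j` for all `j`, `s ⊒∼ t` and lex comparison of arguments. -/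
    | lex {f ss g ts} : (∀ j, SPO (Term.app f ss) (ts j)) →
        qge (Term.app f ss) (Term.app g ts) →
        SPOLex (List.ofFn ss) (List.ofFn ts) → SPO (Term.app f ss) (Term.app g ts)

  /-- Lexicographic extension of `SPO` to argument lists. -/
  inductive SPOLex : List (Term F ar V) → List (Term F ar V) → Prop where
    | head {s t l₁ l₂} : SPO s t → SPOLex (s :: l₁) (t :: l₂)
    | tail {s l₁ l₂} : SPOLex l₁ l₂ → SPOLex (s :: l₁) (s :: l₂)
    | longer {s l₁} : SPOLex (s :: l₁) []
end

end SPO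

section Props

variable {F V : Type} {ar : F → ℕ}

/-- Closure under contexts: replacing one argument. -/
def ClosedCtx (R : Term F ar V → Term F ar V → Prop) : Prop :=
  ∀ (f : F) (args : Fin (ar f) → Term F ar V) (i : Fin (ar f)) (s t : Term F ar V),
    R s t → R (Term.app f (Function.update args i s)) (Term.app f (Function.update args i t))

/-- Closure under substitutions. -/
def ClosedSubst (R : Term F ar V → Term F ar V → Prop) : Prop :=
  ∀ (σ : V → Term F ar V) (s t : Term F ar V), R s t → R (s.subst σ) (t.subst σ)

/-- A reduction order: a well-founded strict order closed under contexts and substitutions. -/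
def ReductionOrder (R : Term F ar V → Term F ar V → Prop) : Prop :=
  (∀ s, ¬ R s s) ∧ Transitive R ∧ WellFounded (fun s t => R t s) ∧
    ClosedCtx R ∧ ClosedSubst R

/-- `Subterm t s` : `t` is a subterm of `s`. -/
inductive Subterm : Term F ar V → Term F ar V → Prop where
  | refl {t} : Subterm t t
  | arg {t f ss} (i : Fin (ar f)) : Subterm t (ss i) → Subterm t (Term.app f ss)

/-- `ProperSubterm t s` : `t` is a proper subterm of `s`. -/
def ProperSubterm (t s : Term F ar V) : Prop :=
  ∃ (f : F) (ss : Fin (ar f) → Term F ar V) (i : Fin (ar f)),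
    s = Term.app f ss ∧ Subterm t (ss i)

/-- The rewrite relation of a TRS `R`: closure of the rules under substitutions and contexts. -/
inductive Rewrite (R : Set (Term F ar V × Term F ar V)) : Term F ar V → Term F ar V → Prop where
  | rule {l r} (σ : V → Term F ar V) : (l, r) ∈ R → Rewrite R (l.subst σ) (r.subst σ)
  | ctx {s t} (f : F) (args : Fin (ar f) → Term F ar V) (i : Fin (ar f)) :
      Rewrite R s t →
      Rewrite R (Term.app f (Function.update args i s)) (Term.app f (Function.update args i t))

end Props

section Pair

variable {F V A : Type} (ar : F → ℕ) (I : (f : F) → (Fin (ar f) → A) → A)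
  (lt : A → A → Prop) (prec : F → F → Prop)

/-- `s ⊒∼ t` : both non-variable, and `s >_A t`, or `s ≥_A t` and `root(s) ≿ root(t)`. -/
def QGE (s t : Term F ar V) : Prop :=
  ∃ (f : F) (ss : Fin (ar f) → Term F ar V) (g : F) (ts : Fin (ar g) → Term F ar V),
    s = Term.app f ss ∧ t = Term.app g ts ∧
      (GTA ar I lt s t ∨ (GEA ar I lt s t ∧ prec f g))

/-- `s ⊐ t` : both non-variable, and `s >_A t`, or `s ≥_A t` and `root(s) ≻ root(t)`. -/
def QGT (s t : Term F ar V) : Prop :=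
  ∃ (f : F) (ss : Fin (ar f) → Term F ar V) (g : F) (ts : Fin (ar g) → Term F ar V),
    s = Term.app f ss ∧ t = Term.app g ts ∧
      (GTA ar I lt s t ∨ (GEA ar I lt s t ∧ prec f g ∧ ¬ prec g f))

variable (Im : (f : F) → (Fin (ar f) → A) → A)

/-- Interpretation of the marked term `t♯` (root symbol interpreted by `Im`). -/
def evalSharp (α : V → A) : Term F ar V → A
  | .var v => α v
  | .app f ts => Im f (fun i => (ts i).eval I α)

/-- `s♯ >_A t♯`. -/
def GTAS (s t : Term F ar V) : Prop :=
  ∀ α : V → A, lt (evalSharp ar I Im α t) (evalSharp ar I Im α s)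

/-- `s♯ ≥_A t♯`. -/
def GEAS (s t : Term F ar V) : Prop :=
  ∀ α : V → A, RC lt (evalSharp ar I Im α t) (evalSharp ar I Im α s)

/-- Marked version of `⊒∼` : `s♯ >_A t♯`, or `s♯ ≥_A t♯` and `root(s) ≿ root(t)`. -/
def QGES (s t : Term F ar V) : Prop :=
  ∃ (f : F) (ss : Fin (ar f) → Term F ar V) (g : F) (ts : Fin (ar g) → Term F ar V),
    s = Term.app f ss ∧ t = Term.app g ts ∧
      (GTAS ar I lt Im s t ∨ (GEAS ar I lt Im s t ∧ prec f g))

/-- Marked version of `⊐` : `s♯ >_A t♯`, or `s♯ ≥_A t♯` and `root(s) ≻ root(t)`. -/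
def QGTS (s t : Term F ar V) : Prop :=
  ∃ (f : F) (ss : Fin (ar f) → Term F ar V) (g : F) (ts : Fin (ar g) → Term F ar V),
    s = Term.app f ss ∧ t = Term.app g ts ∧
      (GTAS ar I lt Im s t ∨ (GEAS ar I lt Im s t ∧ prec f g ∧ ¬ prec g f))

/-- The generalized weighted path order: `s ≥_A t` and `s >_spo t` for the SPO induced
from the marked order pair. -/
def GWPO (s t : Term F ar V) : Prop :=
  GEA ar I lt s t ∧ SPO (QGES ar I lt prec Im) (QGTS ar I lt prec Im) s t

end Pair


section MSPOAux

variable {F V : Type} {ar : F → ℕ}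

/-- Size of a term. -/
def tsize : Term F ar V → ℕ
  | .var _ => 1
  | .app _ args => 1 + ∑ i, tsize (args i)

lemma tsize_pos (t : Term F ar V) : 0 < tsize t := by
  cases t <;> simp [tsize]

lemma tsize_arg_lt {f : F} (args : Fin (ar f) → Term F ar V) (i : Fin (ar f)) :
    tsize (args i) < tsize (Term.app f args) := by
  have h : tsize (args i) ≤ ∑ j, tsize (args j) :=
    Finset.single_le_sum (f := fun j => tsize (args j))
      (fun j _ => Nat.zero_le _) (Finset.mem_univ i)
  simp only [tsize]
  omega

lemma tsize_mem_lt {f : F} {args : Fin (ar f) → Term F ar V} {a : Term F ar V}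
    (h : a ∈ List.ofFn args) : tsize a < tsize (Term.app f args) := by
  obtain ⟨i, rfl⟩ := List.mem_ofFn.mp h
  exact tsize_arg_lt args i

variable (qge qgt : Term F ar V → Term F ar V → Prop)

lemma lex_trans_param : ∀ (l1 l2 l3 : List (Term F ar V)),
    (∀ a ∈ l1, ∀ b ∈ l2, ∀ c ∈ l3, SPO qge qgt a b → SPO qge qgt b c → SPO qge qgt a c) →
    SPOLex qge qgt l1 l2 → SPOLex qge qgt l2 l3 → SPOLex qge qgt l1 l3 := by
  intro l1
  induction l1 with
  | nil => intro l2 l3 _ h1 _; cases h1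
  | cons a l1' ih =>
    intro l2 l3 H h1 h2
    cases h1 with
    | head hab =>
      cases h2 with
      | head hbc =>
        exact .head (H _ (by simp) _ (by simp) _ (by simp) hab hbc)
      | tail h2' => exact .head hab
      | longer => exact .longer
    | longer => cases h2
    | tail h1' =>
      cases h2 with
      | head hac => exact .head hac
      | tail h2' =>
        exact .tail (ih _ _ (fun x hx y hy z hz =>
          H x (List.mem_cons_of_mem _ hx) y (List.mem_cons_of_mem _ hy)
            z (List.mem_cons_of_mem _ hz)) h1' h2')
      | longer => exact .longer

lemma lex_map_param (g : Term F ar V → Term F ar V) :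
    ∀ (l1 l2 : List (Term F ar V)),
    (∀ a ∈ l1, ∀ b ∈ l2, SPO qge qgt a b → SPO qge qgt (g a) (g b)) →
    SPOLex qge qgt l1 l2 → SPOLex qge qgt (l1.map g) (l2.map g) := by
  intro l1
  induction l1 with
  | nil => intro l2 _ h; cases h
  | cons a l1' ih =>
    intro l2 H h
    cases h with
    | head hab =>
      simp only [List.map_cons]
      exact .head (H _ (by simp) _ (by simp) hab)
    | tail h' =>
      simp only [List.map_cons]
      exact .tail (ih _ (fun x hx y hy => H x (List.mem_cons_of_mem _ hx)
        y (List.mem_cons_of_mem _ hy)) h')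
    | longer =>
      simp only [List.map_cons, List.map_nil]
      exact .longer

lemma lex_ofFn : ∀ (n : ℕ) (as bs : Fin n → Term F ar V) (i : Fin n),
    (∀ j, j ≠ i → as j = bs j) → SPO qge qgt (as i) (bs i) →
    SPOLex qge qgt (List.ofFn as) (List.ofFn bs) := by
  intro n
  induction n with
  | zero => intro _ _ i; exact i.elim0
  | succ n ih =>
    intro as bs i hne hspo
    rw [List.ofFn_succ, List.ofFn_succ]
    rcases Fin.eq_zero_or_eq_succ i with rfl | ⟨i', rfl⟩
    · exact .head hspo
    · have h0 : as 0 = bs 0 := hne 0 (Fin.succ_ne_zero i').symm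
      rw [h0]
      exact .tail (ih (fun j => as j.succ) (fun j => bs j.succ) i'
        (fun j hj => hne j.succ (fun e => hj (Fin.succ_injective _ e))) hspo)

lemma spo_trans_aux
    (qge_refl : ∀ t : Term F ar V, t.IsApp → qge t t) (qge_trans : Transitive qge)
    (qgt_trans : Transitive qgt)
    (qge_dom : ∀ s t, qge s t → s.IsApp ∧ t.IsApp)
    (qgt_dom : ∀ s t, qgt s t → s.IsApp ∧ t.IsApp)
    (compat : ∀ s t u v, qge s t → qgt t u → qge u v → qgt s v) :
    ∀ (n : ℕ) (s t u : Term F ar V), tsize s + tsize t + tsize u ≤ n →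
      SPO qge qgt s t → SPO qge qgt t u → SPO qge qgt s u := by
  intro n
  induction n with
  | zero =>
    intro s t u h _ _
    have := tsize_pos s; have := tsize_pos t; have := tsize_pos u
    omega
  | succ n ih =>
    intro s t u hn h1 h2
    cases h1 with
    | @sub f ss t i h =>
      exact .sub i (ih _ _ _ (by have := tsize_arg_lt ss i; omega) h h2)
    | @subEq f ss t i e =>
      exact .sub i (by rw [e]; exact h2)
    | @gt f ss g ts hts hgt =>
      have h1' : SPO qge qgt (Term.app f ss) (Term.app g ts) := .gt hts hgt
      have hlt1 : ∀ j, tsize (ts j) < tsize (Term.app g ts) := tsize_arg_lt ts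
      cases h2 with
      | @sub _ _ _ j h =>
        exact ih _ _ _ (by have := hlt1 j; omega) (hts j) h
      | @subEq _ _ _ j e => exact e ▸ hts j
      | @gt _ _ h us hus hgt2 =>
        have hlt2 : ∀ k, tsize (us k) < tsize (Term.app h us) := tsize_arg_lt us
        exact .gt (fun k => ih _ _ _ (by have := hlt2 k; omega) h1' (hus k))
          (qgt_trans hgt hgt2)
      | @lex _ _ h us hus hq2 hlex2 =>
        have hlt2 : ∀ k, tsize (us k) < tsize (Term.app h us) := tsize_arg_lt us
        exact .gt (fun k => ih _ _ _ (by have := hlt2 k; omega) h1' (hus k))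
          (compat _ _ _ _ (qge_refl _ (qgt_dom _ _ hgt).1) hgt hq2)
    | @lex f ss g ts hts hq hlex =>
      have h1' : SPO qge qgt (Term.app f ss) (Term.app g ts) := .lex hts hq hlex
      have hlt1 : ∀ j, tsize (ts j) < tsize (Term.app g ts) := tsize_arg_lt ts
      cases h2 with
      | @sub _ _ _ j h =>
        exact ih _ _ _ (by have := hlt1 j; omega) (hts j) h
      | @subEq _ _ _ j e => exact e ▸ hts j
      | @gt _ _ h us hus hgt2 =>
        have hlt2 : ∀ k, tsize (us k) < tsize (Term.app h us) := tsize_arg_lt us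
        exact .gt (fun k => ih _ _ _ (by have := hlt2 k; omega) h1' (hus k))
          (compat _ _ _ _ hq hgt2 (qge_refl _ (qgt_dom _ _ hgt2).2))
      | @lex _ _ h us hus hq2 hlex2 =>
        have hlt2 : ∀ k, tsize (us k) < tsize (Term.app h us) := tsize_arg_lt us
        refine .lex (fun k => ih _ _ _ (by have := hlt2 k; omega) h1' (hus k))
          (qge_trans hq hq2) (lex_trans_param qge qgt _ _ _ ?_ hlex hlex2)
        intro x hx y hy z hz hxy hyz
        have hx' := tsize_mem_lt hx
        have hy' := tsize_mem_lt hy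
        have hz' := tsize_mem_lt hz
        exact ih x y z (by omega) hxy hyz

lemma spo_subst_aux (qge_subst : ClosedSubst qge) (qgt_subst : ClosedSubst qgt)
    (σ : V → Term F ar V) :
    ∀ (n : ℕ) (s t : Term F ar V), tsize s + tsize t ≤ n → SPO qge qgt s t →
      SPO qge qgt (s.subst σ) (t.subst σ) := by
  intro n
  induction n with
  | zero =>
    intro s t h _
    have := tsize_pos s; have := tsize_pos t
    omega
  | succ n ih =>
    intro s t hn h
    cases h with
    | @sub f ss t i h =>
      simp only [Term.subst]
      exact .sub i (ih _ _ (by have := tsize_arg_lt ss i; omega) h)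
    | @subEq f ss t i e =>
      simp only [Term.subst]
      exact .subEq i (by rw [e])
    | @gt f ss g ts hts hgt =>
      have hlt1 : ∀ j, tsize (ts j) < tsize (Term.app g ts) := tsize_arg_lt ts
      simp only [Term.subst]
      exact .gt (fun j => ih _ _ (by have := hlt1 j; omega) (hts j))
        (qgt_subst σ _ _ hgt)
    | @lex f ss g ts hts hq hlex =>
      have hlt1 : ∀ j, tsize (ts j) < tsize (Term.app g ts) := tsize_arg_lt ts
      simp only [Term.subst]
      refine .lex (fun j => ih _ _ (by have := hlt1 j; omega) (hts j))
        (qge_subst σ _ _ hq) ?_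
      have hmap := lex_map_param qge qgt (Term.subst σ) (List.ofFn ss) (List.ofFn ts)
        (fun a ha b hb hab => ih a b
          (by have := tsize_mem_lt ha; have := tsize_mem_lt hb; omega) hab) hlex
      simpa [List.map_ofFn, Function.comp_def] using hmap

/-- Bounded lexicographic relation on lists of SPO-accessible terms. -/
def RLex (n : ℕ) (l' l : List (Term F ar V)) : Prop :=
  SPOLex qge qgt l l' ∧ l'.length ≤ n ∧
    ∀ x ∈ l', Acc (fun a b => SPO qge qgt b a) x

lemma rlex_acc_nil (n : ℕ) : Acc (RLex qge qgt n) ([] : List (Term F ar V)) :=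
  Acc.intro _ (fun _ h => by cases h.1)

lemma lex_acc : ∀ (n : ℕ) (l : List (Term F ar V)), l.length ≤ n →
    (∀ x ∈ l, Acc (fun a b => SPO qge qgt b a) x) → Acc (RLex qge qgt n) l := by
  intro n
  induction n with
  | zero =>
    intro l hl _
    have : l = [] := List.length_eq_zero_iff.mp (Nat.le_zero.mp hl)
    subst this
    exact rlex_acc_nil qge qgt 0
  | succ n ihn =>
    intro l hl hsn
    cases l with
    | nil => exact rlex_acc_nil qge qgt (n+1)
    | cons a tl =>
      have ha : Acc (fun a b => SPO qge qgt b a) a := hsn a (by simp)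
      have htl : ∀ x ∈ tl, Acc (fun a b => SPO qge qgt b a) x :=
        fun x hx => hsn x (List.mem_cons_of_mem _ hx)
      have hltl : tl.length ≤ n := by simpa using hl
      clear hsn hl
      induction ha generalizing tl with
      | intro a _ ihA =>
        have hacc : Acc (RLex qge qgt n) tl := ihn tl hltl htl
        clear htl hltl
        induction hacc with
        | intro tl _ ihT =>
          constructor
          rintro l' ⟨hlex, hlen, hsn'⟩
          cases hlex with
          | @head _ b _ l₂ hab =>
            exact ihA b hab l₂ (fun x hx => hsn' x (List.mem_cons_of_mem _ hx))
              (by simpa using hlen)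
          | @tail _ _ l₂ h' =>
            exact ihT l₂ ⟨h', by simpa using hlen,
              fun x hx => hsn' x (List.mem_cons_of_mem _ hx)⟩
          | longer => exact rlex_acc_nil qge qgt (n+1)

lemma sn_app
    (qge_refl : ∀ t : Term F ar V, t.IsApp → qge t t) (qge_trans : Transitive qge)
    (compat : ∀ s t u v, qge s t → qgt t u → qge u v → qgt s v)
    (B : ℕ) (hB : ∀ f : F, ar f ≤ B) :
    ∀ (s : Term F ar V), Acc (fun a b => qgt b a) s →
    ∀ (l : List (Term F ar V)), Acc (RLex qge qgt B) l →
    ∀ (g : F) (ts : Fin (ar g) → Term F ar V), l = List.ofFn ts →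
      (∀ j, Acc (fun a b => SPO qge qgt b a) (ts j)) →
      qge s (Term.app g ts) →
      Acc (fun a b => SPO qge qgt b a) (Term.app g ts) := by
  intro s haccs
  induction haccs with
  | intro s _ ihS =>
    intro l haccl
    induction haccl with
    | intro l _ ihL =>
      intro g ts hlz hts hge
      constructor
      intro u
      induction u with
      | var v =>
        intro hu
        cases hu with
        | sub i hs => exact (hts i).inv hs
        | subEq i e => exact e ▸ hts i
      | app h us ihu =>
        intro hu
        cases hu with
        | sub i hs => exact (hts i).inv hs
        | subEq i e => exact e ▸ hts i
        | gt hargs hgt =>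
          have hus : ∀ k, Acc (fun a b => SPO qge qgt b a) (us k) :=
            fun k => ihu k (hargs k)
          have hqgt : qgt s (Term.app h us) :=
            compat _ _ _ _ hge hgt (qge_refl _ trivial)
          exact ihS _ hqgt (List.ofFn us)
            (lex_acc qge qgt B _ (by simpa using hB h)
              (fun x hx => by obtain ⟨k, rfl⟩ := List.mem_ofFn.mp hx; exact hus k))
            h us rfl hus (qge_refl _ trivial)
        | lex hargs hq hlex =>
          have hus : ∀ k, Acc (fun a b => SPO qge qgt b a) (us k) :=
            fun k => ihu k (hargs k)
          exact ihL (List.ofFn us)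
            ⟨by rw [hlz]; exact hlex, by simpa using hB h,
              fun x hx => by obtain ⟨k, rfl⟩ := List.mem_ofFn.mp hx; exact hus k⟩
            h us rfl hus (qge_trans hge hq)

lemma spo_wf
    (qge_refl : ∀ t : Term F ar V, t.IsApp → qge t t) (qge_trans : Transitive qge)
    (compat : ∀ s t u v, qge s t → qgt t u → qge u v → qgt s v)
    (qgt_wf : WellFounded (fun s t => qgt t s))
    (B : ℕ) (hB : ∀ f : F, ar f ≤ B) :
    WellFounded (fun a b => SPO qge qgt b a) := by
  constructor
  intro t
  induction t with
  | var v =>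
    constructor
    intro u hu
    cases hu
  | app f ss ih =>
    exact sn_app qge qgt qge_refl qge_trans compat B hB (Term.app f ss)
      (qgt_wf.apply _) (List.ofFn ss)
      (lex_acc qge qgt B _ (by simpa using hB f)
        (fun x hx => by obtain ⟨k, rfl⟩ := List.mem_ofFn.mp hx; exact ih k))
      f ss rfl ih (qge_refl _ trivial)

end MSPOAux

/-- Every monotonic semantic path order is a reduction order: for every
reduction triple `(ge, qge, qgt)` — `ge` a rewrite preorder, `(qge, qgt)` a stable order
pair on non-variable terms with `qgt` well-founded, and `ge`, `qge` in harmony — the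
relation `s >ₘ t` iff `ge s t ∧ SPO qge qgt s t` is a reduction order. -/
theorem mspo_is_reduction_order
    {F V : Type} [Fintype F] [Countable V] [Infinite V] {ar : F → ℕ}
    (ge qge qgt : Term F ar V → Term F ar V → Prop)
    -- `ge` is a rewrite preorder
    (ge_refl : ∀ t, ge t t) (ge_trans : Transitive ge)
    (ge_ctx : ClosedCtx ge) (ge_subst : ClosedSubst ge)
    -- `(qge, qgt)` is an order pair on non-variable terms
    (qge_dom : ∀ s t, qge s t → s.IsApp ∧ t.IsApp)
    (qgt_dom : ∀ s t, qgt s t → s.IsApp ∧ t.IsApp)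
    (qge_refl : ∀ t : Term F ar V, t.IsApp → qge t t)
    (qge_trans : Transitive qge)
    (qgt_irrefl : ∀ s, ¬ qgt s s) (qgt_trans : Transitive qgt)
    (compat : ∀ s t u v, qge s t → qgt t u → qge u v → qgt s v)
    -- stability
    (qge_subst : ClosedSubst qge) (qgt_subst : ClosedSubst qgt)
    -- `qgt` is well-founded
    (qgt_wf : WellFounded (fun s t => qgt t s))
    -- harmony of `ge` and `qge`
    (harmony : ∀ (f : F) (ss : Fin (ar f) → Term F ar V) (i : Fin (ar f))
      (t : Term F ar V), ge (ss i) t →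
        qge (Term.app f ss) (Term.app f (Function.update ss i t))) :
    ReductionOrder (fun s t => ge s t ∧ SPO qge qgt s t) := by
  have hB : ∀ f : F, ar f ≤ Finset.univ.sup ar := fun f => Finset.le_sup (Finset.mem_univ f)
  have spoWF : WellFounded (fun a b => SPO qge qgt b a) :=
    spo_wf qge qgt qge_refl qge_trans compat qgt_wf _ hB
  have spoTrans : ∀ s t u : Term F ar V,
      SPO qge qgt s t → SPO qge qgt t u → SPO qge qgt s u := fun s t u h1 h2 =>
    spo_trans_aux qge qgt qge_refl qge_trans qgt_trans qge_dom qgt_dom compat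
      (tsize s + tsize t + tsize u) s t u le_rfl h1 h2
  have Rwf : WellFounded (fun s t => (ge t s ∧ SPO qge qgt t s)) :=
    Subrelation.wf (fun {x y} h => h.2) spoWF
  refine ⟨?_, ?_, Rwf, ?_, ?_⟩
  · -- irreflexivity
    intro s
    have h := Rwf.apply s
    induction h with
    | intro x _ ih => exact fun hxx => ih x hxx hxx
  · -- transitivity
    rintro s t u ⟨g1, s1⟩ ⟨g2, s2⟩
    exact ⟨ge_trans g1 g2, spoTrans _ _ _ s1 s2⟩
  · -- closure under contexts
    rintro f args i s t ⟨h1, h2⟩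
    refine ⟨ge_ctx f args i s t h1, ?_⟩
    refine SPO.lex (fun j => ?_) ?_ ?_
    · by_cases hj : j = i
      · subst hj
        rw [Function.update_self]
        exact SPO.sub j (by rw [Function.update_self]; exact h2)
      · rw [Function.update_of_ne hj]
        exact SPO.subEq j (Function.update_of_ne hj _ _)
    · have hh := harmony f (Function.update args i s) i t
        (by rw [Function.update_self]; exact h1)
      rwa [Function.update_idem] at hh
    · refine lex_ofFn qge qgt (ar f) _ _ i (fun j hj => ?_) ?_
      · rw [Function.update_of_ne hj, Function.update_of_ne hj]
      · rw [Function.update_self, Function.update_self]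
        exact h2
  · -- closure under substitutions
    rintro σ s t ⟨h1, h2⟩
    exact ⟨ge_subst σ s t h1,
      spo_subst_aux qge qgt qge_subst qgt_subst σ (tsize s + tsize t) s t le_rfl h2⟩
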